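/- For all x ≥ 0: ∫_{−∞}^{0} (1/√(2π)) e^{−(y−x)²/2} (log√(2π) + y²/2) dy = log√(2π)·Q(x) + (x²/2)Q(x) + (1/2)Q(x) − (x/2)·(1/√(2π))e^{−x²/2}, and this is at most (log√(2π) + 1/2)·Q(x). -/

import Mathlib

open MeasureTheory

noncomputable def Qf (x : ℝ) : ℝ :=
  ∫ t in Set.Ioi x, (1 / Real.sqrt (2 * Real.pi)) * Real.exp (-t ^ 2 / 2)

section aux
open Set Filter

/-- integrability of t^n * exp(-t^2/2) on Ioi x for x ≥ 0 -/
lemma aux_int0 : Integrable (fun t : ℝ => Real.exp (-t ^ 2 / 2)) := by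
  have h := integrable_exp_neg_mul_sq (b := (1/2 : ℝ)) (by norm_num)
  have e : (fun t : ℝ => Real.exp (-t ^ 2 / 2)) = fun t => Real.exp (-(1/2) * t ^ 2) := by
    funext t; congr 1; ring
  rw [e]; exact h

lemma aux_int1 : Integrable (fun t : ℝ => t * Real.exp (-t ^ 2 / 2)) := by
  have h := integrable_mul_exp_neg_mul_sq (b := (1/2 : ℝ)) (by norm_num)
  have e : (fun t : ℝ => t * Real.exp (-t ^ 2 / 2)) = fun t => t * Real.exp (-(1/2) * t ^ 2) := by
    funext t; congr 2; ring
  rw [e]; exact h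

lemma aux_int2 {x : ℝ} (hx : 0 ≤ x) :
    IntegrableOn (fun t : ℝ => t ^ 2 * Real.exp (-t ^ 2 / 2)) (Ioi x) := by
  have h := (integrable_rpow_mul_exp_neg_mul_sq (b := (1/2 : ℝ)) (by norm_num)
    (s := 2) (by norm_num)).restrict (s := Ioi x)
  refine h.congr ?_
  filter_upwards [ae_restrict_mem measurableSet_Ioi] with t ht
  have ht0 : 0 ≤ t := le_trans hx (le_of_lt ht)
  rw [Real.rpow_two]
  ring_nf

lemma tendsto_exp_sq : Tendsto (fun t : ℝ => Real.exp (-t ^ 2 / 2)) atTop (nhds 0) := by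
  apply Real.tendsto_exp_atBot.comp
  have h : Tendsto (fun t : ℝ => t ^ 2 / 2) atTop atTop :=
    (tendsto_pow_atTop two_ne_zero).atTop_div_const (by norm_num)
  rw [show (fun t : ℝ => -t ^ 2 / 2) = (fun t : ℝ => -(t ^ 2 / 2)) by funext t; ring]
  exact Filter.tendsto_neg_atBot_iff.mpr h

lemma tendsto_mul_exp_sq : Tendsto (fun t : ℝ => t * Real.exp (-t ^ 2 / 2)) atTop (nhds 0) := by
  have hz : Filter.Tendsto (fun y : ℝ => Real.exp (-(1/2) * y)) atTop (nhds 0) := by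
    have h2 : Filter.Tendsto (fun y : ℝ => -(1/2 : ℝ) * y) atTop atBot := by
      rw [show (fun y : ℝ => -(1/2 : ℝ) * y) = fun y => -(y/2) by funext y; ring]
      exact Filter.tendsto_neg_atBot_iff.mpr (tendsto_id.atTop_div_const (by norm_num))
    exact Real.tendsto_exp_atBot.comp h2
  have h := (rpow_mul_exp_neg_mul_sq_isLittleO_exp_neg (b := (1/2 : ℝ)) (by norm_num)
    (s := 1)).isBigO.trans_tendsto hz
  refine h.congr' ?_
  filter_upwards [eventually_ge_atTop (0:ℝ)] with t ht
  rw [Real.rpow_one]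
  ring_nf

lemma aux_I1 (x : ℝ) :
    ∫ t in Ioi x, t * Real.exp (-t ^ 2 / 2) = Real.exp (-x ^ 2 / 2) := by
  have hderiv : ∀ t ∈ Ici x, HasDerivAt (fun t : ℝ => -Real.exp (-t ^ 2 / 2))
      (t * Real.exp (-t ^ 2 / 2)) t := by
    intro t _
    have h1 : HasDerivAt (fun t : ℝ => -t ^ 2 / 2) (-t) t := by
      have := ((hasDerivAt_pow 2 t).neg).div_const 2
      refine this.congr_deriv ?_; simp; ring
    have := (h1.exp).neg
    refine this.congr_deriv ?_; ring
  have := integral_Ioi_of_hasDerivAt_of_tendsto' hderiv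
    (aux_int1.restrict) (tendsto_exp_sq.neg)
  rw [this]; ring

lemma aux_I2 {x : ℝ} (hx : 0 ≤ x) :
    ∫ t in Ioi x, t ^ 2 * Real.exp (-t ^ 2 / 2)
      = x * Real.exp (-x ^ 2 / 2) + ∫ t in Ioi x, Real.exp (-t ^ 2 / 2) := by
  have hderiv : ∀ t ∈ Ici x, HasDerivAt (fun t : ℝ => -(t * Real.exp (-t ^ 2 / 2)))
      (t ^ 2 * Real.exp (-t ^ 2 / 2) - Real.exp (-t ^ 2 / 2)) t := by
    intro t _
    have h1 : HasDerivAt (fun t : ℝ => -t ^ 2 / 2) (-t) t := by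
      have := ((hasDerivAt_pow 2 t).neg).div_const 2
      refine this.congr_deriv ?_; simp; ring
    have := ((hasDerivAt_id t).mul h1.exp).neg
    refine this.congr_deriv ?_
    simp only [id]
    ring
  have hint : IntegrableOn
      (fun t : ℝ => t ^ 2 * Real.exp (-t ^ 2 / 2) - Real.exp (-t ^ 2 / 2)) (Ioi x) :=
    (aux_int2 hx).sub (aux_int0.restrict)
  have := integral_Ioi_of_hasDerivAt_of_tendsto' hderiv hint (tendsto_mul_exp_sq.neg)
  rw [integral_sub (aux_int2 hx) (aux_int0.restrict)] at this
  have h0 : (0:ℝ) - -(x * Real.exp (-x ^ 2 / 2)) = x * Real.exp (-x ^ 2 / 2) := by ring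
  rw [neg_zero] at this
  linarith [this]

end aux

open Set Filter in
theorem stmt14 (x : ℝ) (hx : 0 ≤ x) :
    (∫ y in Set.Iio (0:ℝ),
        (1 / Real.sqrt (2 * Real.pi)) * Real.exp (-(y - x) ^ 2 / 2) *
          (Real.log (Real.sqrt (2 * Real.pi)) + y ^ 2 / 2)) =
      Real.log (Real.sqrt (2 * Real.pi)) * Qf x + x ^ 2 / 2 * Qf x + 1 / 2 * Qf x -
        x / 2 * ((1 / Real.sqrt (2 * Real.pi)) * Real.exp (-x ^ 2 / 2)) ∧
    (∫ y in Set.Iio (0:ℝ),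
        (1 / Real.sqrt (2 * Real.pi)) * Real.exp (-(y - x) ^ 2 / 2) *
          (Real.log (Real.sqrt (2 * Real.pi)) + y ^ 2 / 2)) ≤
      (Real.log (Real.sqrt (2 * Real.pi)) + 1 / 2) * Qf x := by
  set c : ℝ := 1 / Real.sqrt (2 * Real.pi) with hc
  set L : ℝ := Real.log (Real.sqrt (2 * Real.pi)) with hL
  have hcpos : 0 < c := by
    rw [hc]
    positivity
  set g : ℝ → ℝ := fun t => c * Real.exp (-t ^ 2 / 2) * (L + (x - t) ^ 2 / 2) with hg
  -- change of variables
  have hmp : MeasurePreserving (fun t : ℝ => x - t) volume volume :=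
    Measure.measurePreserving_sub_left volume x
  have hemb : MeasurableEmbedding (fun t : ℝ => x - t) :=
    (Homeomorph.subLeft x).isClosedEmbedding.measurableEmbedding
  have hpre : (fun t : ℝ => x - t) ⁻¹' (Ioi x) = Iio (0:ℝ) := by
    ext y
    simp only [Set.mem_preimage, Set.mem_Ioi, Set.mem_Iio]
    constructor <;> intro h <;> linarith
  have key := hmp.setIntegral_preimage_emb hemb g (Ioi x)
  rw [hpre] at key
  have e1 : (∫ y in Set.Iio (0:ℝ),
      c * Real.exp (-(y - x) ^ 2 / 2) * (L + y ^ 2 / 2)) = ∫ t in Ioi x, g t := by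
    rw [← key]
    refine setIntegral_congr_fun measurableSet_Iio (fun y _ => ?_)
    simp only [hg]
    rw [show x - (x - y) = y by ring, show (-(y - x) ^ 2 / 2 : ℝ) = -(x - y) ^ 2 / 2 by ring]
  -- splitting the integral
  have hgfun : g = fun t => c * (L + x ^ 2 / 2) * Real.exp (-t ^ 2 / 2)
      - (c * x) * (t * Real.exp (-t ^ 2 / 2)) + (c / 2) * (t ^ 2 * Real.exp (-t ^ 2 / 2)) := by
    funext t
    simp only [hg]
    ring
  have hi0 : IntegrableOn (fun t : ℝ => c * (L + x ^ 2 / 2) * Real.exp (-t ^ 2 / 2)) (Ioi x) :=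
    (aux_int0.restrict).const_mul _
  have hi1 : IntegrableOn (fun t : ℝ => (c * x) * (t * Real.exp (-t ^ 2 / 2))) (Ioi x) :=
    (aux_int1.restrict).const_mul _
  have hi2 : IntegrableOn (fun t : ℝ => (c / 2) * (t ^ 2 * Real.exp (-t ^ 2 / 2))) (Ioi x) :=
    (aux_int2 hx).const_mul _
  have hsplit : (∫ t in Ioi x, g t) =
      c * (L + x ^ 2 / 2) * (∫ t in Ioi x, Real.exp (-t ^ 2 / 2))
        - (c * x) * Real.exp (-x ^ 2 / 2)
        + (c / 2) * (x * Real.exp (-x ^ 2 / 2) + ∫ t in Ioi x, Real.exp (-t ^ 2 / 2)) := by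
    simp only [hgfun]
    have hi01 : IntegrableOn (fun t : ℝ => c * (L + x ^ 2 / 2) * Real.exp (-t ^ 2 / 2)
        - (c * x) * (t * Real.exp (-t ^ 2 / 2))) (Ioi x) := hi0.sub hi1
    rw [integral_add hi01 hi2, integral_sub hi0 hi1, integral_const_mul, integral_const_mul, integral_const_mul,
      aux_I1, aux_I2 hx]
  have hQ : Qf x = c * ∫ t in Ioi x, Real.exp (-t ^ 2 / 2) := by
    rw [Qf, ← integral_const_mul]
  have main : (∫ y in Set.Iio (0:ℝ),
      c * Real.exp (-(y - x) ^ 2 / 2) * (L + y ^ 2 / 2)) =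
      L * Qf x + x ^ 2 / 2 * Qf x + 1 / 2 * Qf x - x / 2 * (c * Real.exp (-x ^ 2 / 2)) := by
    rw [e1, hsplit, hQ]
    ring
  refine ⟨main, ?_⟩
  -- the tail bound x^2 * Qf x ≤ x * c * exp(-x^2/2)
  have hmono : x ^ 2 * Qf x ≤ x * (c * Real.exp (-x ^ 2 / 2)) := by
    have h1 : x ^ 2 * Qf x = ∫ t in Ioi x, x ^ 2 * (c * Real.exp (-t ^ 2 / 2)) := by
      rw [Qf, ← integral_const_mul]
    have h2 : x * (c * Real.exp (-x ^ 2 / 2))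
        = ∫ t in Ioi x, (x * c) * (t * Real.exp (-t ^ 2 / 2)) := by
      rw [integral_const_mul, aux_I1]
      ring
    rw [h1, h2]
    refine setIntegral_mono_on (((aux_int0.restrict (s := Ioi x)).const_mul c).const_mul _)
      ((aux_int1.restrict).const_mul _) measurableSet_Ioi (fun t ht => ?_)
    have ht' : x < t := ht
    have hexp : 0 < Real.exp (-t ^ 2 / 2) := Real.exp_pos _
    have hxt : x ^ 2 ≤ x * t := by nlinarith
    calc x ^ 2 * (c * Real.exp (-t ^ 2 / 2)) ≤ (x * t) * (c * Real.exp (-t ^ 2 / 2)) := by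
          apply mul_le_mul_of_nonneg_right hxt (by positivity)
      _ = (x * c) * (t * Real.exp (-t ^ 2 / 2)) := by ring
  rw [main]
  nlinarith [hmono]
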